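/- Let A be a matrix Weyl algebra ideal A = M_N(A₁)·Q(p) ⊆ M_N(A₁) where A₁ is the first Weyl algebra and Q is an N×N matrix over k[p] with det Q ≠ 0. Then A is a left ideal of M_N(A₁) closed under the derivation ∂ = [·, p], and A is dense in M_N(A₁) with respect to the q-adic topology. -/

import Mathlib

open FreeAlgebra

/-- The defining relation `[q,p] = 1` (i.e. `qp = pq + 1`) of the first Weyl algebra,
with `p = ι true`, `q = ι false`. -/
inductive W1Rel (k : Type*) [Field k] :
    FreeAlgebra k Bool → FreeAlgebra k Bool → Prop
  | qp : W1Rel k (ι k false * ι k true) (ι k true * ι k false + 1)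

/-- The first Weyl algebra `A₁ = k⟨p,q | [q,p] = 1⟩`. -/
abbrev Weyl1 (k : Type*) [Field k] := RingQuot (W1Rel k)

/-- The generator `p` of the Weyl algebra. -/
noncomputable def pgen (k : Type*) [Field k] : Weyl1 k :=
  RingQuot.mkAlgHom k (W1Rel k) (ι k true)

/-- The generator `q` of the Weyl algebra. -/
noncomputable def qgen (k : Type*) [Field k] : Weyl1 k :=
  RingQuot.mkAlgHom k (W1Rel k) (ι k false)

namespace WeylDenseAux

open Polynomial

variable {k : Type*} [Field k]

lemma qp_rel : qgen k * pgen k = pgen k * qgen k + 1 := by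
  have h := RingQuot.mkAlgHom_rel k (W1Rel.qp (k := k))
  simpa [pgen, qgen, map_mul, map_add, map_one] using h

lemma q_pow_p (n : ℕ) :
    qgen k * pgen k ^ (n + 1)
      = pgen k ^ (n + 1) * qgen k + ((n : Weyl1 k) + 1) * pgen k ^ n := by
  induction n with
  | zero => simpa using qp_rel
  | succ n ih =>
      have : qgen k * pgen k ^ (n + 2) = (qgen k * pgen k ^ (n + 1)) * pgen k := by
        rw [pow_succ, mul_assoc]
      rw [this, ih, add_mul, mul_assoc, qp_rel, mul_add, mul_one, ← mul_assoc,
        ← pow_succ, mul_assoc ((n : Weyl1 k) + 1), ← pow_succ]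
      rw [add_assoc]
      congr 1
      push_cast
      simp only [add_mul, one_mul]
      abel

lemma q_aeval (f : Polynomial k) :
    qgen k * aeval (pgen k) f
      = aeval (pgen k) f * qgen k + aeval (pgen k) (derivative f) := by
  induction f using Polynomial.induction_on with
  | C a =>
      simp [Algebra.commutes]
  | add f g hf hg =>
      rw [map_add, mul_add, hf, hg, map_add, map_add, add_mul]
      abel
  | monomial n a _ =>
      have h1 : aeval (pgen k) (C a * X ^ (n + 1)) = algebraMap k _ a * pgen k ^ (n + 1) := by
        simp
      have h2 : derivative (C a * X ^ (n + 1) : Polynomial k)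
          = C a * (C ((n : k) + 1) * X ^ n) := by
        rw [derivative_C_mul, derivative_X_pow]
        push_cast
        simp
      rw [h1, h2]
      have h3 : qgen k * (algebraMap k _ a * pgen k ^ (n + 1))
          = algebraMap k _ a * (qgen k * pgen k ^ (n + 1)) := by
        rw [← mul_assoc, ← Algebra.commutes, mul_assoc]
      rw [h3, q_pow_p]
      have h4 : aeval (pgen k) (C a * (C ((n : k) + 1) * X ^ n))
          = algebraMap k _ a * (((n : Weyl1 k) + 1) * pgen k ^ n) := by
        simp [map_mul, mul_assoc]
      rw [h4, mul_add, ← mul_assoc]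

/-- The `k`-submodule of `Weyl1 k` spanned by elements `g(p) qʲ` with `j ≥ m`. -/
noncomputable def T (k : Type*) [Field k] (m : ℕ) : Submodule k (Weyl1 k) :=
  Submodule.span k
    {x | ∃ (g : Polynomial k) (j : ℕ), m ≤ j ∧ x = aeval (pgen k) g * qgen k ^ j}

lemma mem_T {m j : ℕ} (hj : m ≤ j) (g : Polynomial k) :
    aeval (pgen k) g * qgen k ^ j ∈ T k m :=
  Submodule.subset_span ⟨g, j, hj, rfl⟩

lemma T_mono {m m' : ℕ} (h : m ≤ m') : T k m' ≤ T k m :=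
  Submodule.span_mono (fun _x ⟨g, j, hj, hx⟩ => ⟨g, j, h.trans hj, hx⟩)

lemma T_mul_q {m : ℕ} {x : Weyl1 k} (hx : x ∈ T k m) : x * qgen k ∈ T k (m + 1) := by
  have h : T k m ≤ (T k (m + 1)).comap (LinearMap.mulRight k (qgen k)) := by
    rw [T, Submodule.span_le]
    rintro x ⟨g, j, hj, rfl⟩
    simp only [Set.mem_setOf_eq, SetLike.mem_coe, Submodule.mem_comap,
      LinearMap.mulRight_apply]
    rw [mul_assoc, ← pow_succ]
    exact mem_T (by omega) g
  exact h hx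

lemma T_q_mul {m : ℕ} {x : Weyl1 k} (hx : x ∈ T k m) : qgen k * x ∈ T k m := by
  have h : T k m ≤ (T k m).comap (LinearMap.mulLeft k (qgen k)) := by
    rw [T, Submodule.span_le]
    rintro x ⟨g, j, hj, rfl⟩
    simp only [Set.mem_setOf_eq, SetLike.mem_coe, Submodule.mem_comap,
      LinearMap.mulLeft_apply]
    rw [← mul_assoc, q_aeval, add_mul, mul_assoc, ← pow_succ']
    exact add_mem (mem_T (by omega) g) (mem_T hj _)
  exact h hx

lemma T_aeval_mul {m : ℕ} (g : Polynomial k) {x : Weyl1 k} (hx : x ∈ T k m) :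
    aeval (pgen k) g * x ∈ T k m := by
  have h : T k m ≤ (T k m).comap (LinearMap.mulLeft k (aeval (pgen k) g)) := by
    rw [T, Submodule.span_le]
    rintro x ⟨h, j, hj, rfl⟩
    simp only [Set.mem_setOf_eq, SetLike.mem_coe, Submodule.mem_comap,
      LinearMap.mulLeft_apply]
    rw [← mul_assoc, ← map_mul]
    exact mem_T hj _
  exact h hx

lemma q_pow_succ_aeval (i : ℕ) (f : Polynomial k) :
    qgen k ^ (i + 1) * aeval (pgen k) f
      = (qgen k ^ i * aeval (pgen k) f) * qgen k
        + qgen k ^ i * aeval (pgen k) (derivative f) := by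
  rw [pow_succ, mul_assoc, q_aeval, mul_add, ← mul_assoc]

variable [CharZero k]

omit [CharZero k] in
lemma lemM : ∀ (i : ℕ) (f : Polynomial k),
    qgen k ^ i * aeval (pgen k) f ∈ T k (i - f.natDegree) := by
  intro i
  induction i with
  | zero =>
      intro f
      have : qgen k ^ 0 * aeval (pgen k) f = aeval (pgen k) f * qgen k ^ 0 := by
        simp
      rw [this, Nat.zero_sub]
      exact mem_T (Nat.zero_le _) f
  | succ i ih =>
      intro f
      rw [q_pow_succ_aeval]
      refine add_mem ?_ ?_
      · exact T_mono (by omega) (T_mul_q (ih f))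
      · by_cases hf' : derivative f = 0
        · simp [hf']
        · have hd : f.natDegree ≠ 0 := by
            intro h0
            rw [eq_C_of_natDegree_eq_zero h0, derivative_C] at hf'
            exact hf' rfl
          have hle : (derivative f).natDegree ≤ f.natDegree - 1 :=
            natDegree_derivative_le f
          exact T_mono (by omega) (ih (derivative f))

lemma lemE : ∀ (n : ℕ) (f : Polynomial k), f ≠ 0 → f.natDegree = n → ∀ j, n ≤ j →
    ∃ a : ℕ, a ≠ 0 ∧ ∃ r ∈ T k (j - n + 1),
      qgen k ^ j * aeval (pgen k) f
        = algebraMap k _ ((a : k) * f.leadingCoeff) * qgen k ^ (j - n) + r := by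
  intro n
  induction n with
  | zero =>
      intro f hf h0 j hj
      refine ⟨1, one_ne_zero, 0, zero_mem _, ?_⟩
      rw [eq_C_of_natDegree_eq_zero h0]
      simp [Algebra.commutes]
  | succ n ih =>
      intro f hf hdeg j hj
      -- facts about the derivative
      have hf' : derivative f ≠ 0 := by
        intro h
        have := natDegree_eq_zero_of_derivative_eq_zero h
        omega
      have hd'le : (derivative f).natDegree ≤ n := by
        have := natDegree_derivative_le f
        omega
      have hcoeff : (derivative f).coeff n = f.leadingCoeff * ((n : k) + 1) := by
        have := coeff_derivative f n
        rw [this, ← hdeg]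
        rfl
      have hcne : (derivative f).coeff n ≠ 0 := by
        rw [hcoeff]
        refine mul_ne_zero (leadingCoeff_ne_zero.mpr hf) ?_
        have : ((n : k) + 1) = ((n + 1 : ℕ) : k) := by push_cast; ring
        rw [this]
        exact Nat.cast_ne_zero.mpr (by omega)
      have hd' : (derivative f).natDegree = n :=
        le_antisymm hd'le (le_natDegree_of_ne_zero hcne)
      have hlc' : (derivative f).leadingCoeff = f.leadingCoeff * ((n : k) + 1) := by
        rw [leadingCoeff, hd', hcoeff]
      -- inner induction on j
      induction j, hj using Nat.le_induction with
      | base =>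
          rw [q_pow_succ_aeval]
          obtain ⟨a₂, ha₂, r₂, hr₂, heq₂⟩ := ih (derivative f) hf' hd' n le_rfl
          refine ⟨a₂ * (n + 1), by positivity, ?_⟩
          have hterm1 : (qgen k ^ n * aeval (pgen k) f) * qgen k ∈ T k 1 := by
            have := lemM n f
            rw [hdeg] at this
            have h0 : n - (n + 1) = 0 := by omega
            rw [h0] at this
            exact T_mul_q this
          refine ⟨r₂ + (qgen k ^ n * aeval (pgen k) f) * qgen k, ?_, ?_⟩
          · have e : n + 1 - (n + 1) + 1 = 1 := by omega
            rw [e]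
            refine add_mem ?_ hterm1
            have e2 : n - n + 1 = 1 := by omega
            rw [e2] at hr₂
            exact hr₂
          · rw [heq₂, hlc']
            have e3 : n - n = 0 := by omega
            have e4 : n + 1 - (n + 1) = 0 := by omega
            rw [e3, e4]
            have ecast : ((a₂ * (n + 1) : ℕ) : k) * f.leadingCoeff
                = (a₂ : k) * (f.leadingCoeff * ((n : k) + 1)) := by
              push_cast; ring
            rw [ecast]
            abel
      | succ j hj ihj =>
          obtain ⟨a₁, ha₁, r₁, hr₁, heq₁⟩ := ihj
          obtain ⟨a₂, ha₂, r₂, hr₂, heq₂⟩ := ih (derivative f) hf' hd' j (by omega)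
          rw [q_pow_succ_aeval, heq₁, heq₂]
          refine ⟨a₁ + a₂ * (n + 1), by positivity, ?_⟩
          refine ⟨r₁ * qgen k + r₂, ?_, ?_⟩
          · refine add_mem ?_ ?_
            · have := T_mul_q hr₁
              have e : j - (n + 1) + 1 + 1 = j + 1 - (n + 1) + 1 := by omega
              rw [e] at this
              exact this
            · have e : j - n + 1 = j + 1 - (n + 1) + 1 := by omega
              rw [e] at hr₂
              exact hr₂
          · have e1 : j - (n + 1) + 1 = j + 1 - (n + 1) := by omega
            have e2 : j - n = j + 1 - (n + 1) := by omega
            rw [add_mul, mul_assoc, ← pow_succ, e1, e2, hlc']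
            have ecast : (((a₁ + a₂ * (n + 1) : ℕ)) : k) * f.leadingCoeff
                = (a₁ : k) * f.leadingCoeff
                  + (a₂ : k) * (f.leadingCoeff * ((n : k) + 1)) := by
              push_cast; ring
            rw [ecast, map_add, add_mul]
            abel

lemma corr (f : Polynomial k) (hf : f ≠ 0) (m : ℕ) :
    ∀ r ∈ T k m, ∃ v : Weyl1 k, ∃ r' ∈ T k (m + 1),
      v * aeval (pgen k) f = r + r' := by
  intro r hr
  induction hr using Submodule.span_induction with
  | mem x hx =>
      obtain ⟨g, j, hj, rfl⟩ := hx
      set n := f.natDegree with hn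
      obtain ⟨a, ha, r₀, hr₀, heq⟩ := lemE n f hf rfl (j + n) (by omega)
      have e : j + n - n = j := by omega
      rw [e] at heq hr₀
      set c : k := (a : k) * f.leadingCoeff with hc
      have hcne : c ≠ 0 :=
        mul_ne_zero (Nat.cast_ne_zero.mpr ha) (leadingCoeff_ne_zero.mpr hf)
      refine ⟨algebraMap k _ c⁻¹ * (aeval (pgen k) g * qgen k ^ (j + n)),
        algebraMap k _ c⁻¹ * (aeval (pgen k) g * r₀), ?_, ?_⟩
      · have h1 : aeval (pgen k) g * r₀ ∈ T k (m + 1) :=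
          T_mono (by omega) (T_aeval_mul g hr₀)
        have h2 : algebraMap k _ c⁻¹ * (aeval (pgen k) g * r₀)
            = c⁻¹ • (aeval (pgen k) g * r₀) := (Algebra.smul_def _ _).symm
        rw [h2]
        exact Submodule.smul_mem _ _ h1
      · have hinv : algebraMap k (Weyl1 k) c⁻¹ * algebraMap k (Weyl1 k) c = 1 := by
          rw [← map_mul, inv_mul_cancel₀ hcne, map_one]
        calc algebraMap k _ c⁻¹ * (aeval (pgen k) g * qgen k ^ (j + n))
              * aeval (pgen k) f
            = algebraMap k _ c⁻¹
                * (aeval (pgen k) g * (qgen k ^ (j + n) * aeval (pgen k) f)) := by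
              rw [mul_assoc, mul_assoc]
          _ = algebraMap k _ c⁻¹
                * (aeval (pgen k) g * (algebraMap k _ c * qgen k ^ j + r₀)) := by
              rw [heq]
          _ = algebraMap k _ c⁻¹ * (algebraMap k _ c * (aeval (pgen k) g * qgen k ^ j)
                + aeval (pgen k) g * r₀) := by
              rw [mul_add]
              congr 2
              rw [← mul_assoc, ← Algebra.commutes, mul_assoc]
          _ = (algebraMap k _ c⁻¹ * algebraMap k _ c) * (aeval (pgen k) g * qgen k ^ j)
                + algebraMap k _ c⁻¹ * (aeval (pgen k) g * r₀) := by
              rw [mul_add, ← mul_assoc]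
          _ = aeval (pgen k) g * qgen k ^ j
                + algebraMap k _ c⁻¹ * (aeval (pgen k) g * r₀) := by
              rw [hinv, one_mul]
  | zero => exact ⟨0, 0, zero_mem _, by simp⟩
  | add x y hx hy ihx ihy =>
      obtain ⟨v₁, r₁, hr₁, h₁⟩ := ihx
      obtain ⟨v₂, r₂, hr₂, h₂⟩ := ihy
      refine ⟨v₁ + v₂, r₁ + r₂, add_mem hr₁ hr₂, ?_⟩
      rw [add_mul, h₁, h₂]
      abel
  | smul c x hx ihx =>
      obtain ⟨v, r', hr', h⟩ := ihx
      refine ⟨c • v, c • r', Submodule.smul_mem _ _ hr', ?_⟩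
      rw [smul_mul_assoc, h, smul_add]

lemma lemP (f : Polynomial k) (hf : f ≠ 0) :
    ∀ m : ℕ, ∃ u : Weyl1 k, ∃ r ∈ T k m, u * aeval (pgen k) f = 1 + r := by
  intro m
  induction m with
  | zero =>
      refine ⟨0, -1, ?_, by simp⟩
      have h1 : (1 : Weyl1 k) ∈ T k 0 := by
        have := mem_T (le_refl 0) (1 : Polynomial k)
        simpa using this
      exact neg_mem h1
  | succ m ih =>
      obtain ⟨u, r, hr, hu⟩ := ih
      obtain ⟨v, r', hr', hv⟩ := corr f hf m r hr
      refine ⟨u - v, -r', neg_mem hr', ?_⟩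
      rw [sub_mul, hu, hv]
      abel

omit [CharZero k] in
lemma T_eq_mul_qpow {m : ℕ} {r : Weyl1 k} (hr : r ∈ T k m) :
    ∃ z : Weyl1 k, r = z * qgen k ^ m := by
  have h : T k m ≤ LinearMap.range (LinearMap.mulRight k (qgen k ^ m)) := by
    rw [T, Submodule.span_le]
    rintro x ⟨g, j, hj, rfl⟩
    refine ⟨aeval (pgen k) g * qgen k ^ (j - m), ?_⟩
    simp only [LinearMap.mulRight_apply]
    rw [mul_assoc, ← pow_add]
    congr 2
    omega
  obtain ⟨z, hz⟩ := h hr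
  exact ⟨z, hz.symm⟩

lemma lemINV (f : Polynomial k) (hf : f ≠ 0) (m : ℕ) :
    ∃ u z : Weyl1 k, u * aeval (pgen k) f = 1 + z * qgen k ^ m := by
  obtain ⟨u, r, hr, hu⟩ := lemP f hf m
  obtain ⟨z, hz⟩ := T_eq_mul_qpow hr
  exact ⟨u, z, by rw [hu, hz]⟩

end WeylDenseAux

open WeylDenseAux in
theorem weyl_ideal_dense (k : Type*) [Field k] [IsAlgClosed k] [CharZero k] (N : ℕ)
    (Q : Matrix (Fin N) (Fin N) (Polynomial k)) (hdet : Q.det ≠ 0) :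
    (∀ x ∈ {y : Matrix (Fin N) (Fin N) (Weyl1 k) |
        ∃ X, y = X * Q.map (Polynomial.aeval (pgen k))},
      ∀ y ∈ {y : Matrix (Fin N) (Fin N) (Weyl1 k) |
        ∃ X, y = X * Q.map (Polynomial.aeval (pgen k))},
      x + y ∈ {y : Matrix (Fin N) (Fin N) (Weyl1 k) |
        ∃ X, y = X * Q.map (Polynomial.aeval (pgen k))}) ∧
    (∀ r : Matrix (Fin N) (Fin N) (Weyl1 k),
      ∀ x ∈ {y : Matrix (Fin N) (Fin N) (Weyl1 k) |
        ∃ X, y = X * Q.map (Polynomial.aeval (pgen k))},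
      r * x ∈ {y : Matrix (Fin N) (Fin N) (Weyl1 k) |
        ∃ X, y = X * Q.map (Polynomial.aeval (pgen k))}) ∧
    (∀ x ∈ {y : Matrix (Fin N) (Fin N) (Weyl1 k) |
        ∃ X, y = X * Q.map (Polynomial.aeval (pgen k))},
      x * Matrix.scalar (Fin N) (pgen k) - Matrix.scalar (Fin N) (pgen k) * x ∈
        {y : Matrix (Fin N) (Fin N) (Weyl1 k) |
          ∃ X, y = X * Q.map (Polynomial.aeval (pgen k))}) ∧
    (∀ m : ℕ, 1 ≤ m → ∀ Y : Matrix (Fin N) (Fin N) (Weyl1 k),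
      ∃ x ∈ {y : Matrix (Fin N) (Fin N) (Weyl1 k) |
        ∃ X, y = X * Q.map (Polynomial.aeval (pgen k))},
      ∃ Z : Matrix (Fin N) (Fin N) (Weyl1 k),
        Y = x + Z * Matrix.scalar (Fin N) (qgen k ^ m)) := by
  set Qm : Matrix (Fin N) (Fin N) (Weyl1 k) := Q.map (Polynomial.aeval (pgen k)) with hQm
  refine ⟨?_, ?_, ?_, ?_⟩
  · rintro x ⟨X, rfl⟩ y ⟨X', rfl⟩
    exact ⟨X + X', by rw [add_mul]⟩
  · rintro r x ⟨X, rfl⟩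
    exact ⟨r * X, by rw [mul_assoc]⟩
  · rintro x ⟨X, rfl⟩
    have hcomm : Qm * Matrix.scalar (Fin N) (pgen k)
        = Matrix.scalar (Fin N) (pgen k) * Qm := by
      have key : ∀ f : Polynomial k,
          Polynomial.aeval (pgen k) f * pgen k = pgen k * Polynomial.aeval (pgen k) f := by
        intro f
        have h1 : Polynomial.aeval (pgen k) (f * Polynomial.X)
            = Polynomial.aeval (pgen k) (Polynomial.X * f) := by rw [mul_comm]
        simpa [map_mul] using h1
      ext i j
      rw [Matrix.scalar_apply, Matrix.mul_diagonal, Matrix.diagonal_mul]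
      exact key (Q i j)
    refine ⟨X * Matrix.scalar (Fin N) (pgen k) - Matrix.scalar (Fin N) (pgen k) * X, ?_⟩
    rw [sub_mul, mul_assoc, hcomm, ← mul_assoc, ← mul_assoc]
  · intro m _hm Y
    obtain ⟨u, z, huz⟩ := lemINV Q.det hdet m
    set F : Polynomial k →+* Weyl1 k := (Polynomial.aeval (pgen k)).toRingHom with hF
    have hmap : (Q.adjugate.map (Polynomial.aeval (pgen k))) * Qm
        = Matrix.scalar (Fin N) (Polynomial.aeval (pgen k) Q.det) := by
      have h1 : (Q.adjugate * Q).map F = Q.adjugate.map F * Q.map F := Matrix.map_mul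
      rw [Matrix.adjugate_mul] at h1
      have h2 : (Q.det • (1 : Matrix (Fin N) (Fin N) (Polynomial k))).map F
          = Matrix.scalar (Fin N) (F Q.det) := by
        ext i j
        simp only [Matrix.map_apply, Matrix.smul_apply, Matrix.one_apply, smul_eq_mul,
          mul_ite, mul_one, mul_zero, apply_ite F, map_zero, Matrix.scalar_apply,
          Matrix.diagonal_apply]
      have h3 : Q.adjugate.map F = Q.adjugate.map (Polynomial.aeval (pgen k)) := rfl
      have h4 : Q.map F = Qm := rfl
      rw [h3, h4] at h1
      rw [← h1, h2]
      rfl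
    have hscal : Matrix.scalar (Fin N) u * (Q.adjugate.map (Polynomial.aeval (pgen k)) * Qm)
        = 1 + Matrix.scalar (Fin N) z * Matrix.scalar (Fin N) (qgen k ^ m) := by
      rw [hmap, ← map_mul, huz, map_add, map_one, map_mul]
    refine ⟨Y * (Matrix.scalar (Fin N) u * Q.adjugate.map (Polynomial.aeval (pgen k))) * Qm,
      ⟨Y * (Matrix.scalar (Fin N) u * Q.adjugate.map (Polynomial.aeval (pgen k))), rfl⟩,
      -(Y * Matrix.scalar (Fin N) z), ?_⟩
    rw [mul_assoc, mul_assoc, hscal, mul_add, mul_one, Matrix.neg_mul, mul_assoc]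
    abel
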